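/- Let G be a finite-dimensional real solvable Lie algebra whose derived ideal G¹ = [G,G] has dimension 2. Then G is not 2-step nilpotent if and only if the dimension of A_G is 1 or 2. -/

import Mathlib

open Module

attribute [-simp] LieIdeal.toLieSubalgebra_toSubmodule

/-- The restriction to a Lie ideal `I` of the adjoint operator `ad X`,
as a linear endomorphism of `I`. -/
noncomputable def adRestrict {G : Type*} [LieRing G] [LieAlgebra ℝ G]
    (I : LieIdeal ℝ G) (X : G) : Module.End ℝ (I : Submodule ℝ G) :=
  (LieAlgebra.ad ℝ G X).restrict fun v hv => I.lie_mem hv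

/-- The span `A_G` of the restricted adjoint operators inside `End(G¹)`. -/
noncomputable def adSpan (G : Type*) [LieRing G] [LieAlgebra ℝ G] :
    Submodule ℝ (Module.End ℝ ((LieAlgebra.derivedSeries ℝ G 1 : LieIdeal ℝ G) : Submodule ℝ G)) :=
  Submodule.span ℝ (Set.range fun X : G => adRestrict (LieAlgebra.derivedSeries ℝ G 1) X)

/-- A Lie algebra is 2-step nilpotent if `[G,[G,G]] = 0` while `[G,G] ≠ 0`. -/
def IsTwoStepNilpotent (G : Type*) [LieRing G] : Prop :=
  (∀ X Y Z : G, ⁅X, ⁅Y, Z⁆⁆ = 0) ∧ ∃ X Y : G, ⁅X, Y⁆ ≠ 0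

section helpers
variable (G : Type*) [LieRing G] [LieAlgebra ℝ G]

lemma lie_mem_derived (x y : G) : ⁅x, y⁆ ∈ LieAlgebra.derivedSeries ℝ G 1 := by
  rw [LieAlgebra.derivedSeries_def, LieAlgebra.derivedSeriesOfIdeal_succ]
  exact LieSubmodule.lie_mem_lie (LieSubmodule.mem_top x) (LieSubmodule.mem_top y)

lemma derived_submodule_span :
    ((LieAlgebra.derivedSeries ℝ G 1 : LieIdeal ℝ G) : Submodule ℝ G)
      = Submodule.span ℝ {m : G | ∃ x y : G, ⁅x, y⁆ = m} := by
  rw [LieAlgebra.derivedSeries_def, LieAlgebra.derivedSeriesOfIdeal_succ,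
    LieAlgebra.derivedSeriesOfIdeal_zero, LieIdeal.toLieSubalgebra_toSubmodule,
    LieSubmodule.lieIdeal_oper_eq_linear_span']
  congr 1
  ext m
  simp

lemma adRestrict_coe (X v : G) (hv : v ∈ ((LieAlgebra.derivedSeries ℝ G 1 : LieIdeal ℝ G) : Submodule ℝ G)) :
    ((adRestrict (LieAlgebra.derivedSeries ℝ G 1) X ⟨v, hv⟩ : _) : G) = ⁅X, v⁆ := by
  rfl

lemma adSpan_eq_bot_iff : adSpan G = ⊥ ↔ ∀ X Y Z : G, ⁅X, ⁅Y, Z⁆⁆ = 0 := by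
  rw [adSpan, Submodule.span_eq_bot]
  constructor
  · intro h X Y Z
    have h1 : adRestrict (LieAlgebra.derivedSeries ℝ G 1) X = 0 := h _ ⟨X, rfl⟩
    have h2 : ((adRestrict (LieAlgebra.derivedSeries ℝ G 1) X ⟨⁅Y, Z⁆, lie_mem_derived G Y Z⟩ : _) : G) = ⁅X, ⁅Y, Z⁆⁆ :=
      adRestrict_coe G X _ _
    rw [h1] at h2
    simpa using h2.symm
  · rintro h _ ⟨X, rfl⟩
    ext v
    obtain ⟨v, hv⟩ := v
    have key : ∀ m ∈ Submodule.span ℝ {m : G | ∃ x y : G, ⁅x, y⁆ = m}, ⁅X, m⁆ = 0 := by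
      intro m hm
      induction hm using Submodule.span_induction with
      | mem m hm => obtain ⟨x, y, rfl⟩ := hm; exact h X x y
      | zero => simp
      | add a b _ _ ha hb => simp [lie_add, ha, hb]
      | smul c a _ ha => simp [lie_smul, ha]
    have hv' : v ∈ Submodule.span ℝ {m : G | ∃ x y : G, ⁅x, y⁆ = m} := by
      rw [← derived_submodule_span]; exact hv
    have hc := adRestrict_coe G X v hv
    rw [key v hv'] at hc
    simpa using hc

/-- if every vector is an eigenvector, the endomorphism is scalar -/
lemma scalar_of_fix (V : Type*) [AddCommGroup V] [Module ℝ V] [FiniteDimensional ℝ V]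
    (h2 : finrank ℝ V = 2) (T : Module.End ℝ V) (h : ∀ v : V, ∃ c : ℝ, T v = c • v) :
    ∃ c : ℝ, T = c • (1 : Module.End ℝ V) := by
  let b : Basis (Fin 2) ℝ V := Module.finBasisOfFinrankEq ℝ V h2
  obtain ⟨c0, h0⟩ := h (b 0)
  obtain ⟨c1, h1⟩ := h (b 1)
  obtain ⟨c2, hsum⟩ := h (b 0 + b 1)
  rw [map_add, h0, h1, smul_add] at hsum
  have e0 := congrArg (fun z => b.repr z 0) hsum
  have e1 := congrArg (fun z => b.repr z 1) hsum
  simp [b.repr_self_apply] at e0 e1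
  refine ⟨c0, b.ext fun i => ?_⟩
  fin_cases i
  · simpa using h0
  · have : c1 = c0 := by rw [e0, e1]
    rw [this] at h1; simpa using h1

end helpers


section abelian
variable (G : Type*) [LieRing G] [LieAlgebra ℝ G] [FiniteDimensional ℝ G]

lemma adRestrict_apply (X z : G) (hz : z ∈ ((LieAlgebra.derivedSeries ℝ G 1 : LieIdeal ℝ G) : Submodule ℝ G)) :
    adRestrict (LieAlgebra.derivedSeries ℝ G 1) X ⟨z, hz⟩
      = ⟨⁅X, z⁆, (LieAlgebra.derivedSeries ℝ G 1).lie_mem hz⟩ :=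
  Subtype.ext (adRestrict_coe G X z hz)

set_option synthInstance.maxHeartbeats 1000000 in
set_option maxHeartbeats 1600000 in
lemma aux_abelian (h2 : Module.finrank ℝ (LieAlgebra.derivedSeries ℝ G 1) = 2)
    (habel : ∀ x ∈ LieAlgebra.derivedSeries ℝ G 1, ∀ y ∈ LieAlgebra.derivedSeries ℝ G 1, ⁅x, y⁆ = (0 : G)) :
    Module.finrank ℝ (adSpan G) ≤ 2 := by
  have h2' : Module.finrank ℝ ((LieAlgebra.derivedSeries ℝ G 1 : LieIdeal ℝ G) : Submodule ℝ G) = 2 := h2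
  -- generators commute
  have hgen : ∀ X Y : G, adRestrict (LieAlgebra.derivedSeries ℝ G 1) X * adRestrict (LieAlgebra.derivedSeries ℝ G 1) Y
      = adRestrict (LieAlgebra.derivedSeries ℝ G 1) Y * adRestrict (LieAlgebra.derivedSeries ℝ G 1) X := by
    intro X Y
    ext ⟨z, hz⟩
    rw [Module.End.mul_apply, Module.End.mul_apply, adRestrict_apply, adRestrict_apply,
      adRestrict_apply, adRestrict_apply]
    show ⁅X, ⁅Y, z⁆⁆ = ⁅Y, ⁅X, z⁆⁆
    rw [leibniz_lie X Y z, habel ⁅X, Y⁆ (lie_mem_derived G X Y) z hz, zero_add]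
  have hc1 : ∀ g ∈ adSpan G, ∀ X : G,
      adRestrict (LieAlgebra.derivedSeries ℝ G 1) X * g = g * adRestrict (LieAlgebra.derivedSeries ℝ G 1) X := by
    intro g hg
    induction hg using Submodule.span_induction with
    | mem g hg => obtain ⟨Y, rfl⟩ := hg; intro X; exact hgen X Y
    | zero => intro X; simp
    | add a b _ _ ha hb => intro X; rw [mul_add, add_mul, ha X, hb X]
    | smul c a _ ha => intro X; rw [mul_smul_comm, smul_mul_assoc, ha X]
  have hcomm : ∀ f ∈ adSpan G, ∀ g ∈ adSpan G, f * g = g * f := by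
    intro f hf
    induction hf using Submodule.span_induction with
    | mem f hf => obtain ⟨X, rfl⟩ := hf; intro g hg; exact (hc1 g hg X)
    | zero => intro g hg; simp
    | add a b _ _ ha hb => intro g hg; rw [add_mul, mul_add, ha g hg, hb g hg]
    | smul c a _ ha => intro g hg; rw [smul_mul_assoc, mul_smul_comm, ha g hg]
  by_cases hscal : ∀ f ∈ adSpan G, ∃ c : ℝ, f = c • (1 : Module.End ℝ ((LieAlgebra.derivedSeries ℝ G 1 : LieIdeal ℝ G) : Submodule ℝ G))
  · have hle : adSpan G ≤ Submodule.span ℝ {(1 : Module.End ℝ ((LieAlgebra.derivedSeries ℝ G 1 : LieIdeal ℝ G) : Submodule ℝ G))} := by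
      intro f hf
      obtain ⟨c, rfl⟩ := hscal f hf
      exact Submodule.smul_mem _ _ (Submodule.mem_span_singleton_self _)
    have h1 := Submodule.finrank_mono hle
    have h2'' : Module.finrank ℝ (Submodule.span ℝ {(1 : Module.End ℝ ((LieAlgebra.derivedSeries ℝ G 1 : LieIdeal ℝ G) : Submodule ℝ G))}) ≤ 1 := by
      simpa using finrank_span_le_card (R := ℝ) {(1 : Module.End ℝ ((LieAlgebra.derivedSeries ℝ G 1 : LieIdeal ℝ G) : Submodule ℝ G))}
    exact le_trans h1 (h2''.trans one_le_two)
  · push_neg at hscal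
    obtain ⟨T, hT, hTns⟩ := hscal
    have hv : ∃ v : ((LieAlgebra.derivedSeries ℝ G 1 : LieIdeal ℝ G) : Submodule ℝ G), ∀ c : ℝ, T v ≠ c • v := by
      by_contra h
      push_neg at h
      obtain ⟨c, hc⟩ := scalar_of_fix _ h2' T h
      exact hTns c hc
    obtain ⟨v, hv⟩ := hv
    have hvne : v ≠ 0 := fun h => hv 0 (by simp [h])
    have hind : LinearIndependent ℝ ![v, T v] := by
      rw [LinearIndependent.pair_iff]
      intro s t hst
      by_cases ht : t = 0
      · subst ht
        simp only [zero_smul, add_zero, smul_eq_zero] at hst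
        exact ⟨hst.resolve_right hvne, rfl⟩
      · exfalso
        apply hv (-(t⁻¹ * s))
        have h1 : t • T v = (-s) • v := by
          have h0 : s • v + t • T v - s • v = 0 - s • v := by rw [hst]
          simpa [neg_smul] using h0
        calc T v = t⁻¹ • (t • T v) := by rw [smul_smul, inv_mul_cancel₀ ht, one_smul]
          _ = t⁻¹ • ((-s) • v) := by rw [h1]
          _ = (-(t⁻¹ * s)) • v := by rw [smul_smul]; ring_nf
    have hcard : Fintype.card (Fin 2) = Module.finrank ℝ ((LieAlgebra.derivedSeries ℝ G 1 : LieIdeal ℝ G) : Submodule ℝ G) := by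
      simp only [Fintype.card_fin]; exact h2'.symm
    let B := basisOfLinearIndependentOfCardEqFinrank hind hcard
    let ev : ↥(adSpan G) →ₗ[ℝ] ((LieAlgebra.derivedSeries ℝ G 1 : LieIdeal ℝ G) : Submodule ℝ G) :=
      (LinearMap.applyₗ v).comp (adSpan G).subtype
    have hinj : Function.Injective ev := by
      rw [injective_iff_map_eq_zero]
      intro f hf
      have h1 : f.1 v = 0 := hf
      have hcm := hcomm f.1 f.2 T hT
      have hTv : f.1 (T v) = 0 := by
        calc f.1 (T v) = (f.1 * T) v := rfl
          _ = (T * f.1) v := by rw [hcm]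
          _ = T (f.1 v) := rfl
          _ = 0 := by rw [h1, map_zero]
      have hz : f.1 = 0 := by
        apply B.ext
        intro i
        fin_cases i
        · simpa [B, coe_basisOfLinearIndependentOfCardEqFinrank] using h1
        · simpa [B, coe_basisOfLinearIndependentOfCardEqFinrank] using hTv
      exact Subtype.ext hz
    have hfin := LinearMap.finrank_le_finrank_of_injective hinj
    rw [h2'] at hfin
    exact hfin

end abelian
lemma lie_skew' {L : Type*} [LieRing L] (x y : L) : ⁅x, y⁆ = -⁅y, x⁆ := by
  rw [← neg_neg ⁅x, y⁆, lie_skew]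

lemma lie_expand {L : Type*} [LieRing L] [LieAlgebra ℝ L] (u v x y : L) (a b c d : ℝ)
    (hx : x = a • u + b • v) (hy : y = c • u + d • v) :
    ⁅x, y⁆ = (a * d - b * c) • ⁅u, v⁆ := by
  subst hx hy
  simp only [lie_add, add_lie, lie_smul, smul_lie, lie_self, smul_zero, zero_add, add_zero,
    smul_smul]
  rw [lie_skew' v u]
  module

lemma repr_coe {G : Type*} [AddCommGroup G] [Module ℝ G] {S : Submodule ℝ G}
    (B : Basis (Fin 2) ℝ S) (x y : S) (hB : ⇑B = ![x, y]) (z : S) :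
    (z : G) = B.repr z 0 • (x : G) + B.repr z 1 • (y : G) := by
  have h := B.sum_repr z
  rw [Fin.sum_univ_two, hB] at h
  simp only [Matrix.cons_val_zero, Matrix.cons_val_one, Matrix.head_cons] at h
  have h2 := congrArg (Subtype.val) h
  simpa using h2.symm

section nonabelian
variable (G : Type*) [LieRing G] [LieAlgebra ℝ G] [FiniteDimensional ℝ G]

set_option maxHeartbeats 1600000 in
set_option synthInstance.maxHeartbeats 1000000 in
lemma aux_nonabelian (h2 : Module.finrank ℝ (LieAlgebra.derivedSeries ℝ G 1) = 2)
    (u v : G) (hu : u ∈ ((LieAlgebra.derivedSeries ℝ G 1 : LieIdeal ℝ G) : Submodule ℝ G))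
    (hv : v ∈ ((LieAlgebra.derivedSeries ℝ G 1 : LieIdeal ℝ G) : Submodule ℝ G))
    (huv : ⁅u, v⁆ ≠ 0) :
    Module.finrank ℝ (adSpan G) ≤ 2 := by
  have h2' : Module.finrank ℝ ((LieAlgebra.derivedSeries ℝ G 1 : LieIdeal ℝ G) : Submodule ℝ G) = 2 := h2
  set e : G := ⁅u, v⁆ with he_def
  have he : e ∈ ((LieAlgebra.derivedSeries ℝ G 1 : LieIdeal ℝ G) : Submodule ℝ G) := lie_mem_derived G u v
  have hune : u ≠ 0 := by intro h; apply huv; rw [he_def, h]; simp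
  have huv_ind : LinearIndependent ℝ
      ![(⟨u, hu⟩ : ((LieAlgebra.derivedSeries ℝ G 1 : LieIdeal ℝ G) : Submodule ℝ G)), ⟨v, hv⟩] := by
    rw [LinearIndependent.pair_iff]
    intro s t hst
    have hstG : s • u + t • v = 0 := by
      have h3 := congrArg (Subtype.val) hst; simpa using h3
    have ht : t = 0 := by
      have h3 := congrArg (fun z => ⁅u, z⁆) hstG
      simp only [lie_add, lie_smul, lie_self, smul_zero, zero_add, lie_zero] at h3
      rcases smul_eq_zero.mp h3 with h | h
      · exact h
      · exact absurd h huv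
    subst ht
    simp only [zero_smul, add_zero, smul_eq_zero] at hstG
    exact ⟨hstG.resolve_right hune, rfl⟩
  have hcard : Fintype.card (Fin 2)
      = Module.finrank ℝ ((LieAlgebra.derivedSeries ℝ G 1 : LieIdeal ℝ G) : Submodule ℝ G) := by
    simp only [Fintype.card_fin]; exact h2'.symm
  let B := basisOfLinearIndependentOfCardEqFinrank huv_ind hcard
  have hB : ⇑B = ![⟨u, hu⟩, ⟨v, hv⟩] := coe_basisOfLinearIndependentOfCardEqFinrank _ _
  have hbr : ∀ x ∈ ((LieAlgebra.derivedSeries ℝ G 1 : LieIdeal ℝ G) : Submodule ℝ G),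
      ∀ y ∈ ((LieAlgebra.derivedSeries ℝ G 1 : LieIdeal ℝ G) : Submodule ℝ G),
      ∃ r : ℝ, ⁅x, y⁆ = r • e := by
    intro x hx y hy
    refine ⟨B.repr ⟨x, hx⟩ 0 * B.repr ⟨y, hy⟩ 1 - B.repr ⟨x, hx⟩ 1 * B.repr ⟨y, hy⟩ 0, ?_⟩
    exact lie_expand u v x y _ _ _ _ (repr_coe B _ _ hB ⟨x, hx⟩) (repr_coe B _ _ hB ⟨y, hy⟩)
  obtain ⟨w, hw, hwspan⟩ : ∃ w, w ∈ ((LieAlgebra.derivedSeries ℝ G 1 : LieIdeal ℝ G) : Submodule ℝ G)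
      ∧ w ∉ Submodule.span ℝ {e} := by
    by_contra h
    push_neg at h
    have hle : ((LieAlgebra.derivedSeries ℝ G 1 : LieIdeal ℝ G) : Submodule ℝ G) ≤ Submodule.span ℝ {e} :=
      fun z hz => h z hz
    have hmono := Submodule.finrank_mono hle
    rw [h2', finrank_span_singleton huv] at hmono
    omega
  have hew_ind : ∀ s t : ℝ, s • e + t • w = 0 → s = 0 ∧ t = 0 := by
    intro s t hst
    by_cases ht : t = 0
    · subst ht
      simp only [zero_smul, add_zero, smul_eq_zero] at hst
      exact ⟨hst.resolve_right huv, rfl⟩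
    · exfalso
      apply hwspan
      rw [Submodule.mem_span_singleton]
      refine ⟨-(t⁻¹ * s), ?_⟩
      have h1 : t • w = (-s) • e := by
        have h0 : s • e + t • w - s • e = 0 - s • e := by rw [hst]
        simpa [neg_smul] using h0
      calc (-(t⁻¹ * s)) • e = t⁻¹ • ((-s) • e) := by rw [smul_smul]; ring_nf
        _ = t⁻¹ • (t • w) := by rw [h1]
        _ = w := by rw [smul_smul, inv_mul_cancel₀ ht, one_smul]
  have hew : LinearIndependent ℝ
      ![(⟨e, he⟩ : ((LieAlgebra.derivedSeries ℝ G 1 : LieIdeal ℝ G) : Submodule ℝ G)), ⟨w, hw⟩] := by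
    rw [LinearIndependent.pair_iff]
    intro s t hst
    apply hew_ind
    have h3 := congrArg Subtype.val hst; simpa using h3
  let B2 := basisOfLinearIndependentOfCardEqFinrank hew hcard
  have hB2 : ⇑B2 = ![⟨e, he⟩, ⟨w, hw⟩] := coe_basisOfLinearIndependentOfCardEqFinrank _ _
  obtain ⟨c, hc⟩ := hbr e he w hw
  have hcne : c ≠ 0 := by
    intro h0
    rw [h0, zero_smul] at hc
    apply huv
    have h4 := lie_expand e w u v _ _ _ _ (repr_coe B2 _ _ hB2 ⟨u, hu⟩) (repr_coe B2 _ _ hB2 ⟨v, hv⟩)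
    rw [hc, smul_zero] at h4
    exact h4
  -- derivation property
  have hder : ∀ f ∈ adSpan G, ∀ x (hx : x ∈ ((LieAlgebra.derivedSeries ℝ G 1 : LieIdeal ℝ G) : Submodule ℝ G))
      (y : G) (hy : y ∈ ((LieAlgebra.derivedSeries ℝ G 1 : LieIdeal ℝ G) : Submodule ℝ G)),
      ((f ⟨⁅x, y⁆, lie_mem_derived G x y⟩ : _) : G)
        = ⁅((f ⟨x, hx⟩ : _) : G), y⁆ + ⁅x, ((f ⟨y, hy⟩ : _) : G)⁆ := by
    intro f hf
    induction hf using Submodule.span_induction with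
    | mem f hf =>
      obtain ⟨X, rfl⟩ := hf
      intro x hx y hy
      beta_reduce
      erw [adRestrict_coe]
      rw [adRestrict_coe, adRestrict_coe]
      exact leibniz_lie X x y
    | zero =>
      intro x hx y hy
      simp only [LinearMap.zero_apply, ZeroMemClass.coe_zero, lie_zero, zero_lie, add_zero]
    | add a b _ _ ha hb =>
      intro x hx y hy
      simp only [LinearMap.add_apply, Submodule.coe_add]
      rw [ha x hx y hy, hb x hx y hy, add_lie, lie_add]
      abel
    | smul r a _ ha =>
      intro x hx y hy
      simp only [LinearMap.smul_apply, SetLike.val_smul]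
      rw [ha x hx y hy]
      simp only [smul_add, smul_lie, lie_smul]
  -- key coefficient vanishing
  have hkey : ∀ f ∈ adSpan G,
      B2.repr (f ⟨e, he⟩) 1 = 0 ∧ B2.repr (f ⟨w, hw⟩) 1 = 0 := by
    intro f hf
    set a := B2.repr (f ⟨e, he⟩) 0 with ha_def
    set b := B2.repr (f ⟨e, he⟩) 1 with hb_def
    set p := B2.repr (f ⟨w, hw⟩) 0 with hp_def
    set q := B2.repr (f ⟨w, hw⟩) 1 with hq_def
    have hfe : ((f ⟨e, he⟩ : _) : G) = a • e + b • w := repr_coe B2 _ _ hB2 _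
    have hfw : ((f ⟨w, hw⟩ : _) : G) = p • e + q • w := repr_coe B2 _ _ hB2 _
    have heq0 := hder f hf e he w hw
    have hsub : (⟨⁅e, w⁆, lie_mem_derived G e w⟩ :
        ((LieAlgebra.derivedSeries ℝ G 1 : LieIdeal ℝ G) : Submodule ℝ G)) = c • ⟨e, he⟩ :=
      Subtype.ext (by simpa using hc)
    rw [hsub, map_smul] at heq0
    rw [Submodule.coe_smul, hfe, hfw] at heq0
    have hRHS : ⁅a • e + b • w, w⁆ + ⁅e, p • e + q • w⁆ = ((a + q) * c) • e := by
      simp only [add_lie, smul_lie, lie_add, lie_smul, lie_self, smul_zero, add_zero, zero_add]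
      rw [hc]
      module
    rw [hRHS] at heq0
    have hz : (c * a - (a + q) * c) • e + (c * b) • w = 0 := by
      have hmod : (c * a - (a + q) * c) • e + (c * b) • w
          = c • (a • e + b • w) - ((a + q) * c) • e := by module
      rw [hmod, heq0, sub_self]
    obtain ⟨h1, hh2⟩ := hew_ind _ _ hz
    constructor
    · rcases mul_eq_zero.mp hh2 with h | h
      · exact absurd h hcne
      · exact h
    · have hq : q * c = 0 := by linear_combination -h1
      rcases mul_eq_zero.mp hq with h | h
      · exact h
      · exact absurd h hcne
  -- injection into ℝ × ℝ
  let Φ : ↥(adSpan G) →ₗ[ℝ] ℝ × ℝ :=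
    LinearMap.prod
      ((B2.coord 0) ∘ₗ (LinearMap.applyₗ (⟨e, he⟩ : ((LieAlgebra.derivedSeries ℝ G 1 : LieIdeal ℝ G) : Submodule ℝ G))) ∘ₗ (adSpan G).subtype)
      ((B2.coord 0) ∘ₗ (LinearMap.applyₗ (⟨w, hw⟩ : ((LieAlgebra.derivedSeries ℝ G 1 : LieIdeal ℝ G) : Submodule ℝ G))) ∘ₗ (adSpan G).subtype)
  have hinj : Function.Injective Φ := by
    rw [injective_iff_map_eq_zero]
    intro f hf
    have hc1 : B2.repr (f.1 ⟨e, he⟩) 0 = 0 := by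
      have := congrArg Prod.fst hf
      simpa [Φ, Basis.coord_apply] using this
    have hc2 : B2.repr (f.1 ⟨w, hw⟩) 0 = 0 := by
      have := congrArg Prod.snd hf
      simpa [Φ, Basis.coord_apply] using this
    obtain ⟨hk1, hk2⟩ := hkey f.1 f.2
    have hfe0 : f.1 ⟨e, he⟩ = 0 := by
      apply B2.ext_elem
      intro i
      fin_cases i
      · simpa using hc1
      · simpa using hk1
    have hfw0 : f.1 ⟨w, hw⟩ = 0 := by
      apply B2.ext_elem
      intro i
      fin_cases i
      · simpa using hc2
      · simpa using hk2
    have hz : f.1 = 0 := by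
      apply LinearMap.ext
      intro z
      rw [LinearMap.zero_apply]
      have hsum := B2.sum_repr z
      rw [Fin.sum_univ_two] at hsum
      have h0 : B2 0 = ⟨e, he⟩ := by rw [show B2 0 = ⇑B2 0 from rfl, hB2]; simp
      have h1 : B2 1 = ⟨w, hw⟩ := by rw [show B2 1 = ⇑B2 1 from rfl, hB2]; simp
      rw [h0, h1] at hsum
      calc f.1 z = f.1 (B2.repr z 0 • ⟨e, he⟩ + B2.repr z 1 • ⟨w, hw⟩) := by rw [hsum]
        _ = B2.repr z 0 • f.1 ⟨e, he⟩ + B2.repr z 1 • f.1 ⟨w, hw⟩ := by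
            rw [map_add, map_smul, map_smul]
        _ = 0 := by rw [hfe0, hfw0]; simp
    exact Subtype.ext hz
  have hfin := LinearMap.finrank_le_finrank_of_injective hinj
  simpa using hfin

end nonabelian

section main
variable (G : Type*) [LieRing G] [LieAlgebra ℝ G] [FiniteDimensional ℝ G]

lemma finrank_adSpan_le (h2 : Module.finrank ℝ (LieAlgebra.derivedSeries ℝ G 1) = 2) :
    Module.finrank ℝ (adSpan G) ≤ 2 := by
  by_cases habel : ∀ x ∈ LieAlgebra.derivedSeries ℝ G 1, ∀ y ∈ LieAlgebra.derivedSeries ℝ G 1,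
      ⁅x, y⁆ = (0 : G)
  · exact aux_abelian G h2 habel
  · push_neg at habel
    obtain ⟨u, hu, v, hv, huv⟩ := habel
    exact aux_nonabelian G h2 u v hu hv huv

end main

/-- If `G` is a finite-dimensional real solvable Lie algebra whose derived
ideal `G¹ = [G,G]` is 2-dimensional, then `G` is not 2-step nilpotent iff
`dim A_G ∈ {1, 2}`. -/
theorem not_twoStepNilpotent_iff_finrank_adSpan
    (G : Type*) [LieRing G] [LieAlgebra ℝ G] [FiniteDimensional ℝ G]
    [LieAlgebra.IsSolvable G]
    (h2 : Module.finrank ℝ (LieAlgebra.derivedSeries ℝ G 1) = 2) :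
    ¬ IsTwoStepNilpotent G ↔
      Module.finrank ℝ (adSpan G) = 1 ∨ Module.finrank ℝ (adSpan G) = 2 := by
  have hle := finrank_adSpan_le G h2
  have hbot : adSpan G = ⊥ ↔ Module.finrank ℝ (adSpan G) = 0 := by
    rw [Submodule.finrank_eq_zero]
  have hex : ∃ X Y : G, ⁅X, Y⁆ ≠ 0 := by
    by_contra h
    push_neg at h
    have hall : ((LieAlgebra.derivedSeries ℝ G 1 : LieIdeal ℝ G) : Submodule ℝ G) = ⊥ := by
      rw [derived_submodule_span, Submodule.span_eq_bot]
      rintro _ ⟨x, y, rfl⟩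
      exact h x y
    have h0 : Module.finrank ℝ ((LieAlgebra.derivedSeries ℝ G 1 : LieIdeal ℝ G) : Submodule ℝ G) = 0 := by
      rw [hall]; exact finrank_bot ℝ G
    have h2' : Module.finrank ℝ ((LieAlgebra.derivedSeries ℝ G 1 : LieIdeal ℝ G) : Submodule ℝ G) = 2 := h2
    omega
  unfold IsTwoStepNilpotent
  rw [← adSpan_eq_bot_iff, hbot] at *
  constructor
  · intro h
    have hne : ¬ Module.finrank ℝ (adSpan G) = 0 := fun h0 => h ⟨h0, hex⟩
    omega
  · rintro h ⟨h0, _⟩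
    omega
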